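/- arXiv:2405.01410 — 4 statements merged into one kernel-verified Lean document; each statement's English description precedes it below -/
import Mathlib

section
/- Let ε > 0, let t, t' be real numbers, let τ ≥ 0 and d' ≥ 0, and let α, β, γ ∈ {0,1}. Suppose there exist real numbers M₁, M₂, M₃, M₄ such that: t − t' + ε ≤ M₁·α, t' − t ≤ M₂·(1 − α), t' + τ + d' − t ≤ M₃·β, t − t' − τ − d' + ε ≤ M₄·(1 − β), γ − α − β ≥ −1, and 2γ − α − β ≤ 0. Then γ = 1 if and only if t' ≤ t and t < t' + τ + d'. -/
/-- The full big-M reformulation is exact: γ = 1 iff trip r enters arc a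
while r' is traversing it, i.e., t' ≤ t < t' + τ + d'. -/
theorem stmt_3 (ε t t' τ d' α β γ : ℝ) (hε : 0 < ε) (hτ : 0 ≤ τ) (hd' : 0 ≤ d')
    (hα : α = 0 ∨ α = 1) (hβ : β = 0 ∨ β = 1) (hγ : γ = 0 ∨ γ = 1)
    (h : ∃ M₁ M₂ M₃ M₄ : ℝ,
      t - t' + ε ≤ M₁ * α ∧
      t' - t ≤ M₂ * (1 - α) ∧
      t' + τ + d' - t ≤ M₃ * β ∧
      t - t' - τ - d' + ε ≤ M₄ * (1 - β) ∧
      γ - α - β ≥ -1 ∧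
      2 * γ - α - β ≤ 0) :
    γ = 1 ↔ (t' ≤ t ∧ t < t' + τ + d') := by
  obtain ⟨M₁, M₂, M₃, M₄, h1, h2, h3, h4, h5, h6⟩ := h
  rcases hα with rfl | rfl <;> rcases hβ with rfl | rfl <;> rcases hγ with h7 | h7 <;>
    subst h7 <;>
    constructor <;> intro hh <;>
    simp only [mul_zero, mul_one, sub_self, sub_zero] at h1 h2 h3 h4 h5 h6 ⊢ <;>
    first
      | (exact ⟨by linarith, by linarith⟩)
      | linarith [hh.1, hh.2]
      | linarith
end

section
/- Let ε > 0, τ ≥ 0, and let t be a real number (the entry time of trip r on arc a). Let R' be a finite set (the other trips on a), and for each r' ∈ R' let t_{r'} be a real number and d_{r'} ≥ 0, and let α_{r'}, β_{r'}, γ_{r'} ∈ {0,1} satisfy, for some real M₁, M₂, M₃, M₄: t − t_{r'} + ε ≤ M₁·α_{r'}, t_{r'} − t ≤ M₂·(1 − α_{r'}), t_{r'} + τ + d_{r'} − t ≤ M₃·β_{r'}, t − t_{r'} − τ − d_{r'} + ε ≤ M₄·(1 − β_{r'}), γ_{r'} − α_{r'} − β_{r'} ≥ −1, and 2γ_{r'}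 − α_{r'} − β_{r'} ≤ 0. Then the sum Σ_{r' ∈ R'} γ_{r'} equals the cardinality of the set {r' ∈ R' : t_{r'} ≤ t < t_{r'} + τ + d_{r'}}, i.e., the flow variable defined as this sum equals the number of trips that r encounters on arc a. -/
/-- The flow variable, defined as the sum of the γ variables, equals the number
of other trips r' whose traversal interval [t_{r'}, t_{r'} + τ + d_{r'}) contains
the entry time t of trip r. -/
theorem stmt_4 {ι : Type*} (R' : Finset ι) (ε τ t M₁ M₂ M₃ M₄ : ℝ)
    (t' d α β γ : ι → ℝ) (hε : 0 < ε) (hτ : 0 ≤ τ)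
    (hd : ∀ r' ∈ R', 0 ≤ d r')
    (hα : ∀ r' ∈ R', α r' = 0 ∨ α r' = 1)
    (hβ : ∀ r' ∈ R', β r' = 0 ∨ β r' = 1)
    (hγ : ∀ r' ∈ R', γ r' = 0 ∨ γ r' = 1)
    (h1 : ∀ r' ∈ R', t - t' r' + ε ≤ M₁ * α r')
    (h2 : ∀ r' ∈ R', t' r' - t ≤ M₂ * (1 - α r'))
    (h3 : ∀ r' ∈ R', t' r' + τ + d r' - t ≤ M₃ * β r')
    (h4 : ∀ r' ∈ R', t - t' r' - τ - d r' + ε ≤ M₄ * (1 - β r'))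
    (h5 : ∀ r' ∈ R', γ r' - α r' - β r' ≥ -1)
    (h6 : ∀ r' ∈ R', 2 * γ r' - α r' - β r' ≤ 0) :
    ∑ r' ∈ R', γ r' =
      ((R'.filter fun r' => t' r' ≤ t ∧ t < t' r' + τ + d r').card : ℝ) := by
  rw [← Finset.sum_boole]
  apply Finset.sum_congr rfl
  intro r' hr
  by_cases hc : t' r' ≤ t ∧ t < t' r' + τ + d r'
  · rw [if_pos hc]
    rcases hα r' hr with ha | ha
    · exfalso; have := h1 r' hr; rw [ha] at this; linarith [hc.1]
    rcases hβ r' hr with hb | hb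
    · exfalso; have := h3 r' hr; rw [hb] at this; linarith [hc.2]
    have h5' := h5 r' hr; rw [ha, hb] at h5'
    rcases hγ r' hr with hg | hg <;> linarith
  · rw [if_neg hc]
    rcases hγ r' hr with hg | hg
    · exact hg
    exfalso
    have h6' := h6 r' hr
    rcases hα r' hr with ha | ha
    · rcases hβ r' hr with hb | hb <;> (rw [ha, hb, hg] at h6'; linarith)
    rcases hβ r' hr with hb | hb
    · rw [ha, hb, hg] at h6'; linarith
    have c1 : t' r' ≤ t := by have := h2 r' hr; rw [ha] at this; linarith
    have c2 : t < t' r' + τ + d r' := by have := h4 r' hr; rw [hb] at this; linarith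
    exact hc ⟨c1, c2⟩
end

section
/- Let ε > 0, τ ≥ 0, d' ≥ 0, and let t, t' be real numbers with ⌞e⌟ ≤ t ≤ ⌜e⌝, ⌞e'⌟ ≤ t', t' + τ + d' ≤ ⌜E'⌝, and ⌜e⌝ ≤ ⌜E⌝, for real bounds ⌞e⌟, ⌜e⌝, ⌞e'⌟, ⌜E'⌝, ⌜E⌝. Set M₃ = ⌜E'⌝ − ⌞e⌟ and M₄ = ⌜E⌝ − ⌞e'⌟ + ε. If either t ≥ t' + τ + d' or t + ε ≤ t' + τ + d', then there exists β ∈ {0,1} satisfying both t' + τ + d' − t ≤ M₃·β and t − t' − τ − d' + ε ≤ M₄·(1 − β) (namely β = 0 if t ≥ t' + τ + d' and β = 1 otherwise). In particular, the tightened big-M constants M₃ and M₄ derived from the arc-specific time windows are valid. -/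
/-- Validity of the tightened big-M constants M₃ = ⌜E'⌝ − ⌞e⌟ and
M₄ = ⌜E⌝ − ⌞e'⌟ + ε derived from arc-specific time windows: the binary variable
β = 0 if t ≥ t' + τ + d' and β = 1 otherwise satisfies both constraints. -/
theorem stmt_6 (ε τ d' t t' el eu el' Eu' Eu : ℝ) (hε : 0 < ε) (hτ : 0 ≤ τ)
    (hd' : 0 ≤ d')
    (ht₁ : el ≤ t) (ht₂ : t ≤ eu) (ht'₁ : el' ≤ t')
    (hE' : t' + τ + d' ≤ Eu') (heE : eu ≤ Eu)
    (h : t' + τ + d' ≤ t ∨ t + ε ≤ t' + τ + d') :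
    ∃ β : ℝ, β = (if t' + τ + d' ≤ t then (0 : ℝ) else 1) ∧ (β = 0 ∨ β = 1) ∧
      t' + τ + d' - t ≤ (Eu' - el) * β ∧
      t - t' - τ - d' + ε ≤ (Eu - el' + ε) * (1 - β) := by
  by_cases hc : t' + τ + d' ≤ t
  · refine ⟨0, by simp [hc], Or.inl rfl, ?_, ?_⟩ <;> nlinarith
  · have h2 : t + ε ≤ t' + τ + d' := h.resolve_left hc
    refine ⟨1, by simp [hc], Or.inr rfl, ?_, ?_⟩ <;> nlinarith
end

section
/- Let ε > 0, τ ≥ 0, d ≥ 0, and let t, t' be real numbers with t ≤ t' (trip r enters arc a before trip r'), subject to time windows e_r ≤ t ≤ e_r + S_r and e_{r'} ≤ t' ≤ e_{r'} + S_{r'} with S_r, S_{r'} ≥ 0. Let the overlap be Δ = t + τ + d − t' + ε and suppose Δ > 0 (a conflict). Define the feasible forward shift σ^f = min(e_{r'} + S_{r'} − t', Δ) and the feasible backward shift σ^b = min(t − e_r, Δ). If σ^f + σ^b ≥ Δ, then the shifted times t_new = t − (Δ − σ^f) and t'_new = t' + σ^f satisfy: e_r ≤ t_new ≤ e_r + S_r,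 e_{r'} ≤ t'_new ≤ e_{r'} + S_{r'}, and t'_new = t_new + τ + d + ε; in particular it is not the case that t_new ≤ t'_new < t_new + τ + d, so the conflict is resolved (with margin ε) without violating either trip's time window. -/
/-- If the feasible forward and backward shifts jointly compensate the overlap Δ,
then shifting trip r backward by Δ − σ^f and trip r' forward by σ^f resolves the
conflict (with margin ε) while respecting both trips' time windows. -/
theorem stmt_13 (ε τ d t t' er er' Sr Sr' : ℝ) (hε : 0 < ε) (hτ : 0 ≤ τ)
    (hd : 0 ≤ d) (hSr : 0 ≤ Sr) (hSr' : 0 ≤ Sr')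
    (htt' : t ≤ t')
    (hw1 : er ≤ t) (hw2 : t ≤ er + Sr) (hw3 : er' ≤ t') (hw4 : t' ≤ er' + Sr')
    (Δ : ℝ) (hΔdef : Δ = t + τ + d - t' + ε) (hΔpos : 0 < Δ)
    (σf σb : ℝ) (hσf : σf = min (er' + Sr' - t') Δ) (hσb : σb = min (t - er) Δ)
    (hcomp : Δ ≤ σf + σb) :
    er ≤ t - (Δ - σf) ∧ t - (Δ - σf) ≤ er + Sr ∧
    er' ≤ t' + σf ∧ t' + σf ≤ er' + Sr' ∧
    t' + σf = (t - (Δ - σf)) + τ + d + ε ∧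
    ¬(t - (Δ - σf) ≤ t' + σf ∧ t' + σf < (t - (Δ - σf)) + τ + d) := by
  have h1 : σf ≤ Δ := by rw [hσf]; exact min_le_right _ _
  have h2 : σf ≤ er' + Sr' - t' := by rw [hσf]; exact min_le_left _ _
  have h3 : σb ≤ t - er := by rw [hσb]; exact min_le_left _ _
  have h4 : 0 ≤ σf := by rw [hσf]; exact le_min (by linarith) (le_of_lt hΔpos)
  refine ⟨by linarith, by linarith, by linarith, by linarith, by linarith, ?_⟩
  rintro ⟨_, h⟩
  linarith
end
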